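/- arXiv:2106.01299 — 6 statements merged into one kernel-verified Lean document; each statement's English description precedes it below -/
import Mathlib

section
/- The rack F(X) × X with operation (g,x) ▷ (h,y) = (gxg⁻¹h, y) together with the map X → F(X) × X, x ↦ (e, x), is the free rack on X: for every rack R and every function f : X → R there is a unique rack morphism φ : F(X) × X → R with φ(e, x) = f(x) for all x. -/
/-- The free rack operation on `F(X) × X`. -/
def rackOp (X : Type*) (a b : FreeGroup X × X) : FreeGroup X × X :=
  (a.1 * FreeGroup.of a.2 * a.1⁻¹ * b.1, b.2)

/-- The rack `F(X) × X` together with `x ↦ (e, x)` is the free rack on `X`: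
every map `f : X → R` to a rack extends uniquely to a rack morphism. -/
theorem stmt_4 (X : Type*) (R : Type*) (opR : R → R → R)
    (hbij : ∀ x : R, Function.Bijective (opR x))
    (hdist : ∀ x y z : R, opR x (opR y z) = opR (opR x y) (opR x z))
    (f : X → R) :
    ∃! φ : FreeGroup X × X → R,
      (∀ a b : FreeGroup X × X, φ (rackOp X a b) = opR (φ a) (φ b)) ∧
      (∀ x : X, φ (1, x) = f x) := by
  set α : FreeGroup X →* Equiv.Perm R :=
    FreeGroup.lift (fun x => Equiv.ofBijective (opR (f x)) (hbij (f x))) with hα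
  have hαof : ∀ (x : X) (r : R), α (FreeGroup.of x) r = opR (f x) r := by
    intro x r
    rw [hα, FreeGroup.lift_apply_of]
    rfl
  have hcancel : ∀ (g : FreeGroup X) (r : R), α g (α g⁻¹ r) = r := by
    intro g r
    rw [← Equiv.Perm.mul_apply, ← map_mul, mul_inv_cancel, map_one, Equiv.Perm.one_apply]
  have hcancel' : ∀ (g : FreeGroup X) (r : R), α g⁻¹ (α g r) = r := by
    intro g r
    rw [← Equiv.Perm.mul_apply, ← map_mul, inv_mul_cancel, map_one, Equiv.Perm.one_apply]
  -- equivariance: α g is a rack morphism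
  have hequi : ∀ g : FreeGroup X, ∀ r s : R,
      α g (opR r s) = opR (α g r) (α g s) := by
    intro g
    induction g using FreeGroup.induction_on with
    | C1 => simp
    | of x =>
        show ∀ r s : R, α (FreeGroup.of x) (opR r s)
          = opR (α (FreeGroup.of x) r) (α (FreeGroup.of x) s)
        intro r s; rw [hαof, hαof, hαof]; exact hdist (f x) r s
    | inv_of x ih =>
        show ∀ r s : R, α (FreeGroup.of x)⁻¹ (opR r s)
          = opR (α (FreeGroup.of x)⁻¹ r) (α (FreeGroup.of x)⁻¹ s)
        have ih' : ∀ r s : R, α (FreeGroup.of x) (opR r s)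
          = opR (α (FreeGroup.of x) r) (α (FreeGroup.of x) s) := ih
        intro r s
        apply (α (FreeGroup.of x)).injective
        rw [hcancel, ih', hcancel, hcancel]
    | mul a b iha ihb =>
        intro r s
        simp only [map_mul, Equiv.Perm.mul_apply, iha, ihb]
  refine ⟨fun p => α p.1 (f p.2), ⟨?_, ?_⟩, ?_⟩
  · rintro ⟨g, x⟩ ⟨h, y⟩
    show α (g * FreeGroup.of x * g⁻¹ * h) (f y) = opR (α g (f x)) (α h (f y))
    simp only [map_mul, Equiv.Perm.mul_apply]
    rw [hαof, hequi g (f x) (α g⁻¹ (α h (f y))), hcancel]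
  · intro x; simp
  · rintro φ ⟨hmor, hone⟩
    funext p
    obtain ⟨g, y⟩ := p
    -- key: φ (g * h, y) = α g (φ (h, y))
    have key : ∀ g : FreeGroup X, ∀ (h : FreeGroup X) (y : X),
        φ (g * h, y) = α g (φ (h, y)) := by
      intro g
      induction g using FreeGroup.induction_on with
      | C1 => intro h y; simp
      | of x =>
          show ∀ (h : FreeGroup X) (y : X),
            φ (FreeGroup.of x * h, y) = α (FreeGroup.of x) (φ (h, y))
          intro h y
          have := hmor (1, x) (h, y)
          simp only [rackOp] at this
          rw [hone] at this
          simpa [hαof] using this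
      | inv_of x ih =>
          show ∀ (h : FreeGroup X) (y : X),
            φ ((FreeGroup.of x)⁻¹ * h, y) = α (FreeGroup.of x)⁻¹ (φ (h, y))
          have ih' : ∀ (h : FreeGroup X) (y : X),
            φ (FreeGroup.of x * h, y) = α (FreeGroup.of x) (φ (h, y)) := ih
          intro h y
          apply (α (FreeGroup.of x)).injective
          rw [← ih' ((FreeGroup.of x)⁻¹ * h) y, ← mul_assoc, mul_inv_cancel, one_mul,
            hcancel]
      | mul a b iha ihb =>
          intro h y
          rw [mul_assoc, iha, ihb, map_mul, Equiv.Perm.mul_apply]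
    have := key g 1 y
    rw [mul_one, hone] at this
    exact this
end

section
/- For any set X, the map F(X) × X → FQ(X) sending (g, x) to g x g⁻¹ (where FQ(X) is the conjugation quandle on the set of conjugates of generators in the free group F(X)) satisfies: (g, x) and (h, y) have the same image if and only if x = y and g⁻¹h is a power of x. -/
open FreeGroup

private lemma list_aux {α : Type*} : ∀ (L : List α) (a b : α),
    a :: L = L ++ [b] → b = a ∧ L = List.replicate L.length a := by
  intro L
  induction L with
  | nil => intro a b h; simpa using h.symm
  | cons c L' ih =>
    intro a b h
    simp only [List.cons_append, List.cons.injEq] at h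
    obtain ⟨rfl, h2⟩ := h
    obtain ⟨hb, hrep⟩ := ih a b h2
    refine ⟨hb, ?_⟩
    simp [List.replicate_succ, ← hrep]

private lemma invRev_concat {α : Type*} (M : List (α × Bool)) (p : α × Bool) :
    invRev (M ++ [p]) = (p.1, !p.2) :: invRev M := by
  simp [invRev]

private lemma invRev_cons {α : Type*} (M : List (α × Bool)) (p : α × Bool) :
    invRev (p :: M) = invRev M ++ [(p.1, !p.2)] := by
  simp [invRev]

private lemma key {α : Type*} [DecidableEq α] :
    ∀ (n : ℕ) (w : FreeGroup α), w.toWord.length = n → ∀ x y : α,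
      FreeGroup.of x * w = w * FreeGroup.of y →
      x = y ∧ ∃ m : ℤ, w = FreeGroup.of x ^ m := by
  intro n
  induction n using Nat.strong_induction_on with
  | _ n IH =>
    intro w hlen x y E
    have hred : reduce w.toWord = w.toWord := reduce_toWord w
    rcases hL : w.toWord with _ | ⟨⟨a, b⟩, L'⟩
    · have hw1 : w = 1 := toWord_eq_nil_iff.mp hL
      subst hw1
      rw [mul_one, one_mul] at E
      exact ⟨FreeGroup.of_injective E, 0, by simp⟩
    · have hofxw : FreeGroup.of x * w = FreeGroup.mk ((x, true) :: w.toWord) := by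
        conv_lhs => rw [← mk_toWord (x := w)]
        rw [show (FreeGroup.of x : FreeGroup α) = FreeGroup.mk [(x, true)] from rfl, mul_mk]
        rfl
      by_cases hcase : (a, b) = (x, false)
      · rw [hcase] at hL
        have hred' : reduce ((x, false) :: L') = (x, false) :: L' := by rw [← hL]; exact hred
        have hw' : (FreeGroup.of x * w).toWord = L' := by
          rw [hofxw, toWord_mk, hL, reduce.cons, hred']
          simp
        have E' : FreeGroup.of x * (FreeGroup.of x * w) = (FreeGroup.of x * w) * FreeGroup.of y := by
          conv_lhs => rw [E]
          rw [← mul_assoc]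
        have hlt : L'.length < n := by rw [← hlen, hL]; simp
        obtain ⟨hxy, m, hm⟩ := IH L'.length hlt (FreeGroup.of x * w) (by rw [hw']) x y E'
        refine ⟨hxy, -1 + m, ?_⟩
        have hw : w = (FreeGroup.of x)⁻¹ * (FreeGroup.of x * w) := by group
        rw [hw, hm, zpow_add, zpow_neg_one]
      · have hxw : (FreeGroup.of x * w).toWord = (x, true) :: w.toWord := by
          rw [hofxw, toWord_mk, reduce.cons, hred, hL]
          rw [show (List.casesOn ((a, b) :: L') [((x : α), true)] fun hd tl =>
              if (x, true).1 = hd.1 ∧ (x, true).2 = !hd.2 then tl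
              else (x, true) :: hd :: tl) =
              (if (x, true).1 = (a, b).1 ∧ (x, true).2 = !(a, b).2 then L'
              else (x, true) :: (a, b) :: L') from rfl]
          rw [if_neg]
          rintro ⟨rfl, h2⟩
          exact hcase (by cases b <;> simp_all)
        have hE : (x, true) :: w.toWord = (w * FreeGroup.of y).toWord := by
          rw [← hxw, E]
        rcases (w.toWord).eq_nil_or_concat with hnil | ⟨M, ⟨c, d⟩, hMc⟩
        · rw [hnil] at hL; exact absurd hL (by simp)
        rw [List.concat_eq_append] at hMc
        have hinvw : (w⁻¹).toWord = (c, !d) :: invRev M := by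
          rw [toWord_inv, hMc, invRev_concat]
        have hinv_red : reduce ((w⁻¹).toWord) = (w⁻¹).toWord := reduce_toWord _
        have hofy : ((FreeGroup.of y)⁻¹ : FreeGroup α) = FreeGroup.mk [(y, false)] := by
          rw [show (FreeGroup.of y : FreeGroup α) = FreeGroup.mk [(y, true)] from rfl, inv_mk]
          simp [invRev]
        have hywinv : (w * FreeGroup.of y)⁻¹ = FreeGroup.mk ((y, false) :: (w⁻¹).toWord) := by
          rw [mul_inv_rev, hofy]
          conv_lhs => rw [← mk_toWord (x := w⁻¹)]
          rw [mul_mk]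
          rfl
        by_cases hyd : (c, d) = (y, false)
        · injection hyd with hc hd
          rw [hc, hd] at hinvw
          exfalso
          have h1 : ((w * FreeGroup.of y)⁻¹).toWord = invRev M := by
            rw [hywinv, toWord_mk, reduce.cons, hinv_red, hinvw]
            simp
          have h2 : (w * FreeGroup.of y).toWord.length = M.length := by
            have h2' := congrArg List.length h1
            rw [toWord_inv, invRev_length, invRev_length] at h2'
            exact h2'
          have h3 := congrArg List.length hE
          rw [h2] at h3
          have h4 := congrArg List.length hMc
          simp at h3 h4
          omega
        · have h1 : ((w * FreeGroup.of y)⁻¹).toWord = (y, false) :: (w⁻¹).toWord := by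
            rw [hywinv, toWord_mk, reduce.cons, hinv_red, hinvw]
            rw [show (List.casesOn ((c, !d) :: invRev M) [((y : α), false)] fun hd tl =>
                if (y, false).1 = hd.1 ∧ (y, false).2 = !hd.2 then tl
                else (y, false) :: hd :: tl) =
                (if (y, false).1 = (c, !d).1 ∧ (y, false).2 = !(c, !d).2 then invRev M
                else (y, false) :: (c, !d) :: invRev M) from rfl]
            rw [if_neg]
            rintro ⟨rfl, h2⟩
            exact hyd (by cases d <;> simp_all)
          have h2 : (w * FreeGroup.of y).toWord = w.toWord ++ [(y, true)] := by
            have h2' := congrArg invRev h1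
            rw [toWord_inv, invRev_invRev, _root_.invRev_cons, toWord_inv, invRev_invRev] at h2'
            simpa using h2'
          rw [h2] at hE
          obtain ⟨hyx, hrep⟩ := list_aux _ _ _ hE
          injection hyx with hy1 _
          refine ⟨hy1.symm, (w.toWord.length : ℤ), ?_⟩
          rw [zpow_natCast]
          apply toWord_injective
          rw [toWord_of_pow]
          exact hrep

/-- The map `F(X) × X → F(X)`, `(g, x) ↦ g x g⁻¹`, identifies `(g,x)` and
`(h,y)` if and only if `x = y` and `g⁻¹ h` is a power of `x`. -/
theorem stmt_5 (X : Type*) (g h : FreeGroup X) (x y : X) :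
    g * FreeGroup.of x * g⁻¹ = h * FreeGroup.of y * h⁻¹ ↔
      x = y ∧ ∃ n : ℤ, g⁻¹ * h = (FreeGroup.of x) ^ n := by
  classical
  constructor
  · intro E
    have E' : FreeGroup.of x * (g⁻¹ * h) = (g⁻¹ * h) * FreeGroup.of y := by
      simpa [mul_assoc] using congrArg (fun z => g⁻¹ * z * h) E
    obtain ⟨hxy, m, hm⟩ := key _ (g⁻¹ * h) rfl x y E'
    exact ⟨hxy, m, hm⟩
  · rintro ⟨rfl, n, hn⟩
    have hh : h = g * FreeGroup.of x ^ n := by rw [← hn]; group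
    subst hh
    group
end

section
/- In the free group F(X) on a set X, the centralizer of a generator x ∈ X is the cyclic subgroup generated by x. -/
private lemma cons_eq_append_aux {α : Type*} (c : α) : ∀ (w : List α),
    c :: w = w ++ [c] → w = List.replicate w.length c
  | [], _ => rfl
  | d :: t, h => by
      simp only [List.cons_append, List.cons.injEq] at h
      obtain ⟨rfl, h⟩ := h
      simp [List.replicate_succ, ← cons_eq_append_aux c t h]

private lemma centralizer_aux {X : Type*} [DecidableEq X] (x : X) :
    ∀ (k : ℕ) (g : FreeGroup X), g.toWord.length ≤ k →
      g * FreeGroup.of x = FreeGroup.of x * g → ∃ n : ℤ, g = (FreeGroup.of x) ^ n := by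
  intro k
  induction k with
  | zero =>
    intro g hg _
    refine ⟨0, ?_⟩
    have : g.toWord = [] := List.length_eq_zero_iff.mp (Nat.le_zero.mp hg)
    simpa using FreeGroup.toWord_eq_nil_iff.mp this
  | succ k ih =>
    intro g hg hcomm
    set a := FreeGroup.of x with ha
    have haw : a = FreeGroup.mk [(x, true)] := by
      rw [← FreeGroup.mk_toWord (x := a), ha, FreeGroup.toWord_of]
    have hgw : g = FreeGroup.mk g.toWord := (FreeGroup.mk_toWord).symm
    have hred : FreeGroup.reduce g.toWord = g.toWord := FreeGroup.reduce_toWord g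
    by_cases hhead : g.toWord.head? = some (x, false)
    · -- strip a leading x⁻¹
      obtain ⟨t, ht⟩ : ∃ t, g.toWord = (x, false) :: t := by
        cases hw : g.toWord with
        | nil => rw [hw] at hhead; simp at hhead
        | cons y t =>
          rw [hw] at hhead
          simp only [List.head?_cons, Option.some.injEq] at hhead
          exact ⟨t, by rw [hhead]⟩
      have htw : (a * g).toWord = t := by
        rw [haw, hgw, FreeGroup.mul_mk, FreeGroup.toWord_mk, ht,
          List.singleton_append, FreeGroup.reduce.cons]
        rw [ht] at hred
        rw [hred]
        simp
      have hlen : (a * g).toWord.length ≤ k := by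
        rw [htw]
        have := hg
        rw [ht] at this
        simpa using this
      have hcomm' : (a * g) * a = a * (a * g) := by
        rw [mul_assoc, hcomm]
      obtain ⟨n, hn⟩ := ih (a * g) hlen hcomm'
      refine ⟨n - 1, ?_⟩
      have : g = a⁻¹ * (a * g) := by group
      rw [this, hn, zpow_sub_one]
      group
    · -- no cancellation at the front
      have hcons : FreeGroup.reduce ((x, true) :: g.toWord) = (x, true) :: g.toWord := by
        rw [FreeGroup.reduce.cons, hred]
        cases hw : g.toWord with
        | nil => rfl
        | cons y t =>
          rw [hw] at hhead
          obtain ⟨y1, y2⟩ := y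
          have : ¬(x = y1 ∧ true = !y2) := by
            rintro ⟨rfl, h2⟩
            apply hhead
            simp only [List.head?_cons, Option.some.injEq]
            cases y2 with
            | false => rfl
            | true => simp at h2
          simp only [this, if_false]
      have hfront : (a * g).toWord = (x, true) :: g.toWord := by
        conv_lhs => rw [haw, hgw]
        rw [FreeGroup.mul_mk, FreeGroup.toWord_mk, List.singleton_append, hcons]
      have hback : (g * a).toWord = FreeGroup.reduce (g.toWord ++ [(x, true)]) := by
        conv_lhs => rw [haw, hgw]
        rw [FreeGroup.mul_mk, FreeGroup.toWord_mk]
      have heq : FreeGroup.reduce (g.toWord ++ [(x, true)]) = (x, true) :: g.toWord := by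
        rw [← hback, hcomm, hfront]
      have hsub : List.Sublist (FreeGroup.reduce (g.toWord ++ [(x, true)])) (g.toWord ++ [(x, true)]) :=
        (FreeGroup.reduce.red).sublist
      rw [heq] at hsub
      have hlist : (x, true) :: g.toWord = g.toWord ++ [(x, true)] :=
        hsub.eq_of_length (by simp)
      have hrep : g.toWord = List.replicate g.toWord.length (x, true) :=
        cons_eq_append_aux _ _ hlist
      refine ⟨(g.toWord.length : ℤ), ?_⟩
      rw [zpow_natCast]
      apply FreeGroup.toWord_injective
      rw [FreeGroup.toWord_of_pow, ← hrep]

/-- In the free group on `X`, the centralizer of a generator `x` is the cyclic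
subgroup generated by `x`. -/
theorem stmt_6 (X : Type*) (x : X) (g : FreeGroup X) :
    g * FreeGroup.of x = FreeGroup.of x * g ↔ ∃ n : ℤ, g = (FreeGroup.of x) ^ n := by
  haveI := Classical.decEq X
  constructor
  · intro h
    exact centralizer_aux x g.toWord.length g le_rfl h
  · rintro ⟨n, rfl⟩
    exact ((Commute.refl (FreeGroup.of x)).zpow_left n)
end

section
/- The ring ℤ[A^{±1}, E]/(E² − E(1−A)) is a pullback of the diagram ℤ[A^{±1}] → ℤ ← ℤ[A^{±1}], where both maps send A to 1, the first projection sends E to 1 − A, and the second sends E to 0. Concretely, the induced ring homomorphism from ℤ[A^{±1}, E]/(E² − E(1−A)) to the fiber product {(p, q) ∈ ℤ[A^{±1}] × ℤ[A^{±1}] : p(1) = q(1)} is a ring isomorphism. -/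
open LaurentPolynomial Polynomial

-- auxiliary: kernel of ε is divisible by 1 - T 1
lemma aux_dvd (ε : LaurentPolynomial ℤ →+* ℤ) (hε : ∀ n : ℤ, ε (T n) = 1)
    (r : LaurentPolynomial ℤ) (hr : ε r = 0) : (1 - T 1) ∣ r := by
  obtain ⟨n, f, hf⟩ := r.exists_T_pow
  have hεf : ε (toLaurent f) = 0 := by
    rw [hf, map_mul, hr, zero_mul]
  -- ε ∘ toLaurent = evalRingHom 1
  have hcomp : ε.comp (toLaurent (R := ℤ)) = Polynomial.evalRingHom 1 := by
    apply Polynomial.ringHom_ext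
    · intro a
      simp [Polynomial.C_eq_intCast, map_intCast]
    · simp [hε]
  have heval : f.eval 1 = 0 := by
    have := congrArg (· f) hcomp
    simp only [RingHom.comp_apply] at this
    simpa [this] using hεf
  have hdvd : (X - Polynomial.C (1 : ℤ)) ∣ f := by
    rw [Polynomial.dvd_iff_isRoot]
    simpa [Polynomial.IsRoot] using heval
  have : (T 1 - 1 : LaurentPolynomial ℤ) ∣ toLaurent f := by
    obtain ⟨g, hg⟩ := hdvd
    exact ⟨toLaurent g, by rw [hg]; simp⟩
  rw [hf] at this
  have h2 : (T 1 - 1 : LaurentPolynomial ℤ) ∣ r :=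
    (IsUnit.dvd_mul_right (isUnit_T (n : ℤ))).mp this
  obtain ⟨g, hg⟩ := h2
  exact ⟨-g, by rw [hg]; ring⟩

noncomputable abbrev RackRing : Type :=
  Polynomial (LaurentPolynomial ℤ) ⧸
    Ideal.span {(X : Polynomial (LaurentPolynomial ℤ)) ^ 2 - X * Polynomial.C ((1 : LaurentPolynomial ℤ) - T 1)}

/-- The ring `ℤ[A^±, E]/(E² − E(1−A))` is the pullback of
`ℤ[A^±] → ℤ ← ℤ[A^±]`, both maps sending `A ↦ 1`: the ring map to
`ℤ[A^±] × ℤ[A^±]` induced by `E ↦ 1 − A` and `E ↦ 0` is injective with image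
the fiber product `{(p, q) | p(1) = q(1)}`. -/
theorem stmt_8 (ε : LaurentPolynomial ℤ →+* ℤ) (hε : ∀ n : ℤ, ε (T n) = 1) :
    ∃ Φ : RackRing →+*
        LaurentPolynomial ℤ × LaurentPolynomial ℤ,
      (∀ p : Polynomial (LaurentPolynomial ℤ),
        Φ (Ideal.Quotient.mk _ p) = (p.eval (1 - T 1), p.eval 0)) ∧
      Function.Injective Φ ∧
      Set.range Φ = {pq : LaurentPolynomial ℤ × LaurentPolynomial ℤ |
        ε pq.1 = ε pq.2} := by
  set a : LaurentPolynomial ℤ := 1 - T 1 with ha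
  set I : Ideal (Polynomial (LaurentPolynomial ℤ)) :=
    Ideal.span {(X : Polynomial (LaurentPolynomial ℤ)) ^ 2 - X * Polynomial.C a} with hI
  set φ : Polynomial (LaurentPolynomial ℤ) →+* LaurentPolynomial ℤ × LaurentPolynomial ℤ :=
    (Polynomial.evalRingHom a).prod (Polynomial.evalRingHom 0) with hφ
  have key : ∀ p ∈ I, φ p = 0 := by
    intro p hp
    rw [hI, Ideal.mem_span_singleton] at hp
    obtain ⟨g, rfl⟩ := hp
    simp [hφ, Prod.ext_iff]
    constructor <;> ring
  refine ⟨Ideal.Quotient.lift I φ key, fun p => rfl, ?_, ?_⟩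
  · apply RingHom.lift_injective_of_ker_le_ideal I key
    intro p hp
    rw [RingHom.mem_ker] at hp
    have h1 : p.eval a = 0 := congrArg Prod.fst hp
    have h2 : p.eval 0 = 0 := congrArg Prod.snd hp
    have hX : (X : Polynomial (LaurentPolynomial ℤ)) ∣ p := by
      rw [Polynomial.X_dvd_iff, Polynomial.coeff_zero_eq_eval_zero, h2]
    obtain ⟨q, rfl⟩ := hX
    have ha0 : a ≠ 0 := by
      rw [ha]
      have : (1 : LaurentPolynomial ℤ) - T 1 = toLaurent (1 - X) := by simp
      rw [this, Polynomial.toLaurent_ne_zero]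
      intro h
      have := congrArg (Polynomial.coeff · 0) h
      simp at this
    have hq : q.eval a = 0 := by
      rw [Polynomial.eval_mul, Polynomial.eval_X] at h1
      exact (mul_eq_zero.mp h1).resolve_left ha0
    have : (X - Polynomial.C a) ∣ q := Polynomial.dvd_iff_isRoot.mpr hq
    obtain ⟨r, rfl⟩ := this
    rw [hI, Ideal.mem_span_singleton]
    exact ⟨r, by ring⟩
  · ext ⟨p, q⟩
    simp only [Set.mem_range, Set.mem_setOf_eq]
    constructor
    · rintro ⟨x, hx⟩
      obtain ⟨P, rfl⟩ := Ideal.Quotient.mk_surjective x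
      have h1 : P.eval a = p := congrArg Prod.fst hx
      have h2 : P.eval 0 = q := congrArg Prod.snd hx
      rw [← h1, ← h2]
      have hεa : ε a = 0 := by simp [ha, hε]
      have h1 : ε (P.eval a) = P.eval₂ ε (ε a) := by
        rw [Polynomial.eval, Polynomial.hom_eval₂]; rfl
      have h2 : ε (P.eval 0) = P.eval₂ ε (ε 0) := by
        rw [Polynomial.eval, Polynomial.hom_eval₂]; rfl
      rw [h1, h2, hεa, map_zero]
    · rintro h
      have : ε (p - q) = 0 := by simp only [map_sub]; omega
      obtain ⟨s, hs⟩ := aux_dvd ε hε (p - q) this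
      refine ⟨Ideal.Quotient.mk I (Polynomial.C q + X * Polynomial.C s), ?_⟩
      show φ (Polynomial.C q + X * Polynomial.C s) = (p, q)
      simp [hφ, Prod.ext_iff, ← ha]
      linear_combination -hs
end

section
/- Let R be an abelian group with a rack structure ▷ such that ▷ : R × R → R is a homomorphism of abelian groups (i.e. (x+x') ▷ (y+y') = x ▷ y + x' ▷ y'). Define A(y) = 0 ▷ y and E(x) = x ▷ 0. Then A is an automorphism of the abelian group R, E is an endomorphism, x ▷ y = E(x) + A(y) for all x, y, and E² = E ∘ (id − A). -/
/-- If an abelian group `R` carries a rack operation `▷` that is a homomorphism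
of abelian groups `R × R → R`, then with `A y = 0 ▷ y` and `E x = x ▷ 0`:
`A` is an automorphism of the abelian group, `E` an endomorphism,
`x ▷ y = E x + A y`, and `E² = E ∘ (id − A)`. -/
theorem stmt_12 {R : Type*} [AddCommGroup R] (op : R → R → R)
    (hbij : ∀ x : R, Function.Bijective (op x))
    (hdist : ∀ x y z : R, op x (op y z) = op (op x y) (op x z))
    (hadd : ∀ x x' y y' : R, op (x + x') (y + y') = op x y + op x' y') :
    Function.Bijective (fun y : R => op 0 y) ∧
    (∀ y y' : R, op 0 (y + y') = op 0 y + op 0 y') ∧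
    (∀ x x' : R, op (x + x') 0 = op x 0 + op x' 0) ∧
    (∀ x y : R, op x y = op x 0 + op 0 y) ∧
    (∀ x : R, op (op x 0) 0 = op (x - op 0 x) 0) := by
  have hA : ∀ y y' : R, op 0 (y + y') = op 0 y + op 0 y' := fun y y' => by
    have := hadd 0 0 y y'; simpa using this
  have hE : ∀ x x' : R, op (x + x') 0 = op x 0 + op x' 0 := fun x x' => by
    have := hadd x x' 0 0; simpa using this
  have hdec : ∀ x y : R, op x y = op x 0 + op 0 y := fun x y => by
    have := hadd x 0 0 y; simpa using this
  refine ⟨hbij 0, hA, hE, hdec, ?_⟩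
  intro x
  have h := hdist x x 0
  rw [hdec x (op x 0), hdec (op x x) (op x 0), hdec x x, hE (op x 0) (op 0 x)] at h
  -- h : E x + A E x = E E x + E A x + A E x
  have h1 : op x 0 = op (op x 0) 0 + op (op 0 x) 0 := add_right_cancel h
  have h2 : op (x - op 0 x) 0 = op x 0 - op (op 0 x) 0 := by
    have := hE (x - op 0 x) (op 0 x)
    rw [sub_add_cancel] at this
    exact eq_sub_of_add_eq this.symm
  rw [h2, eq_sub_iff_add_eq]
  exact h1.symm
end

section
/- Let (X, p) be a pointed set and define an equivalence relation on the free rack F(X) × X by (g, x) ∼ (h, y) iff x = y = p and g⁻¹h is a power of p. Then the rack operation (g,x) ▷ (h,y) = (gxg⁻¹h, y) descends to the quotient, the class [e, p] satisfies [e,p] ▷ [e,p] = [e,p], and the quotient with base-point [e,p] is the free pointed rack on (X, p): every base-point preserving map from (X,p) to a pointed rack (R, q) (where q ▷ q = q) extends uniquely to a base-point preserving rack morphism from the quotient. -/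
/-- The relation identifying `(g, p)` with `(h, p)` when `g⁻¹h` is a power
of `p`, on the free rack `F(X) × X`. -/
def pointedRel {X : Type*} (p : X) (a b : FreeGroup X × X) : Prop :=
  a.2 = p ∧ b.2 = p ∧ ∃ n : ℤ, a.1⁻¹ * b.1 = (FreeGroup.of p) ^ n

/-- The free rack operation on `F(X) × X`. -/
def fOp {X : Type*} (a b : FreeGroup X × X) : FreeGroup X × X :=
  (a.1 * FreeGroup.of a.2 * a.1⁻¹ * b.1, b.2)

lemma fOp_left {X : Type*} (p : X) {a a' : FreeGroup X × X}
    (h : pointedRel p a a') (b : FreeGroup X × X) : fOp a b = fOp a' b := by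
  obtain ⟨h1, h2, n, hn⟩ := h
  have ha' : a'.1 = a.1 * (FreeGroup.of p) ^ n := by
    rw [← hn]; group
  have hc : (FreeGroup.of p) ^ n * FreeGroup.of p * ((FreeGroup.of p) ^ n)⁻¹
      = FreeGroup.of p := by group
  simp only [fOp, ha', h1, h2, Prod.mk.injEq, and_true]
  calc a.1 * FreeGroup.of p * a.1⁻¹ * b.1
      = a.1 * ((FreeGroup.of p) ^ n * FreeGroup.of p * ((FreeGroup.of p) ^ n)⁻¹)
        * a.1⁻¹ * b.1 := by rw [hc]
    _ = a.1 * (FreeGroup.of p) ^ n * FreeGroup.of p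
        * (a.1 * (FreeGroup.of p) ^ n)⁻¹ * b.1 := by group

lemma fOp_right {X : Type*} (p : X) (a : FreeGroup X × X) {b b' : FreeGroup X × X}
    (h : pointedRel p b b') : pointedRel p (fOp a b) (fOp a b') := by
  obtain ⟨h1, h2, n, hn⟩ := h
  refine ⟨h1, h2, n, ?_⟩
  simp only [fOp]
  rw [← hn]; group

/-- The rack operation on the quotient. -/
def qOpAux {X : Type*} (p : X) :
    Quot (pointedRel p) → Quot (pointedRel p) → Quot (pointedRel p) :=
  Quot.lift
    (fun a => Quot.lift (fun b => Quot.mk _ (fOp a b))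
      (fun _ _ h => Quot.sound (fOp_right p a h)))
    (fun a a' h => by
      funext qb
      induction qb using Quot.ind with | _ b =>
      exact congrArg (Quot.mk _) (fOp_left p h b))

lemma qOpAux_mk {X : Type*} (p : X) (a b : FreeGroup X × X) :
    qOpAux p (Quot.mk _ a) (Quot.mk _ b) = Quot.mk _ (fOp a b) := rfl

/-- The free pointed rack on a pointed set `(X, p)`: the free rack operation on
`F(X) × X` descends to the quotient by `pointedRel p`, the class of `(e, p)` is
a base-point, and the quotient satisfies the universal property of the free
pointed rack. -/
theorem stmt_17 {X : Type*} (p : X) :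
    ∃ qop : Quot (pointedRel p) → Quot (pointedRel p) → Quot (pointedRel p),
      (∀ a b : FreeGroup X × X,
        qop (Quot.mk _ a) (Quot.mk _ b) =
          Quot.mk _ (a.1 * FreeGroup.of a.2 * a.1⁻¹ * b.1, b.2)) ∧
      qop (Quot.mk _ (1, p)) (Quot.mk _ (1, p)) = Quot.mk _ (1, p) ∧
      (∀ (R : Type) (opR : R → R → R),
        (∀ x : R, Function.Bijective (opR x)) →
        (∀ x y z : R, opR x (opR y z) = opR (opR x y) (opR x z)) →
        ∀ q : R, opR q q = q →
        ∀ f : X → R, f p = q →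
        ∃! φ : Quot (pointedRel p) → R,
          (∀ a b : Quot (pointedRel p), φ (qop a b) = opR (φ a) (φ b)) ∧
          (∀ x : X, φ (Quot.mk _ (1, x)) = f x) ∧
          φ (Quot.mk _ (1, p)) = q) := by
  refine ⟨qOpAux p, fun a b => rfl, ?_, ?_⟩
  · -- base point
    rw [qOpAux_mk]
    apply Quot.sound
    refine ⟨rfl, rfl, -1, ?_⟩
    show (1 * FreeGroup.of p * 1⁻¹ * 1)⁻¹ * 1 = FreeGroup.of p ^ (-1 : ℤ)
    group
  · intro R opR hbij hdist q hq f hf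
    -- the permutation associated to each generator
    let e : X → Equiv.Perm R := fun x => Equiv.ofBijective _ (hbij (f x))
    let ψ : FreeGroup X →* Equiv.Perm R := FreeGroup.lift e
    have hpure : ∀ y : X, (pure y : FreeGroup X) = FreeGroup.of y := fun _ => rfl
    have hψof : ∀ (x : X) (r : R), ψ (FreeGroup.of x) r = opR (f x) r := by
      intro x r
      show (FreeGroup.lift e) (FreeGroup.of x) r = _
      rw [FreeGroup.lift_apply_of]
      rfl
    have cancel : ∀ (g : FreeGroup X) (r : R), ψ g⁻¹ (ψ g r) = r := by
      intro g r
      rw [map_inv, Equiv.Perm.inv_def, Equiv.symm_apply_apply]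
    have cancel' : ∀ (g : FreeGroup X) (r : R), ψ g (ψ g⁻¹ r) = r := by
      intro g r
      rw [map_inv, Equiv.Perm.inv_def, Equiv.apply_symm_apply]
    -- every ψ g distributes over opR
    have hψdist : ∀ g : FreeGroup X, ∀ s t : R,
        ψ g (opR s t) = opR (ψ g s) (ψ g t) := by
      have hinv : ∀ g : FreeGroup X,
          (∀ s t : R, ψ g (opR s t) = opR (ψ g s) (ψ g t)) →
          (∀ s t : R, ψ g⁻¹ (opR s t) = opR (ψ g⁻¹ s) (ψ g⁻¹ t)) := by
        intro g hg s t
        apply (Equiv.injective (ψ g))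
        rw [hg, cancel', cancel', cancel']
      intro g
      induction g with
      | C1 => simp
      | of x => intro s t; simp only [hpure, hψof]; exact hdist _ _ _
      | inv_of x ih => exact hinv _ ih
      | mul g h ihg ihh =>
        intro s t
        simp only [map_mul, Equiv.Perm.mul_apply, ihh, ihg]
    -- powers of p fix q
    have hfix : ∀ n : ℤ, ψ ((FreeGroup.of p) ^ n) q = q := by
      have h1 : ψ (FreeGroup.of p) q = q := by rw [hψof, hf, hq]
      have h1' : ψ (FreeGroup.of p)⁻¹ q = q := by
        apply (Equiv.injective (ψ (FreeGroup.of p)))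
        rw [cancel', h1]
      intro n
      induction n using Int.induction_on with
      | zero => simp
      | succ n ih => rw [zpow_add, zpow_one, map_mul, Equiv.Perm.mul_apply, h1, ih]
      | pred n ih =>
        rw [show -(n : ℤ) - 1 = -1 + -n by ring, zpow_add, map_mul,
          Equiv.Perm.mul_apply, ih, show ((-1 : ℤ)) = -(1 : ℤ) from rfl,
          zpow_neg, zpow_one, h1']
    -- the candidate map is constant on equivalence classes
    have hresp : ∀ a b : FreeGroup X × X, pointedRel p a b →
        ψ a.1 (f a.2) = ψ b.1 (f b.2) := by
      rintro a b ⟨h1, h2, n, hn⟩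
      have hb : b.1 = a.1 * (FreeGroup.of p) ^ n := by rw [← hn]; group
      rw [h1, h2, hb, map_mul, Equiv.Perm.mul_apply, hf, hfix]
    refine ⟨Quot.lift (fun a => ψ a.1 (f a.2)) hresp, ⟨?_, ?_, ?_⟩, ?_⟩
    · -- morphism property
      intro qa qb
      induction qa using Quot.ind with | _ a =>
      induction qb using Quot.ind with | _ b =>
      rw [qOpAux_mk]
      show ψ (fOp a b).1 (f (fOp a b).2) = opR (ψ a.1 (f a.2)) (ψ b.1 (f b.2))
      simp only [fOp, map_mul, Equiv.Perm.mul_apply]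
      rw [hψof, hψdist, cancel']
    · intro x; show ψ 1 (f x) = f x; simp
    · show ψ 1 (f p) = q; simp [hf]
    · -- uniqueness
      rintro φ' ⟨hmor, hgen, -⟩
      funext z
      induction z using Quot.ind with | _ a =>
      -- key: left multiplication by any g is compatible with φ'
      have key : ∀ g : FreeGroup X, ∀ b : FreeGroup X × X,
          φ' (Quot.mk _ (g * b.1, b.2)) = ψ g (φ' (Quot.mk _ b)) := by
        intro g
        induction g with
        | C1 => intro b; simp
        | of x =>
          intro b
          have h := hmor (Quot.mk _ ((1 : FreeGroup X), x)) (Quot.mk _ b)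
          rw [qOpAux_mk] at h
          simp only [fOp, one_mul, mul_one, inv_one] at h
          rw [h, hgen x, hψof]
        | inv_of x ih =>
          intro b
          apply (Equiv.injective (ψ (FreeGroup.of x)))
          rw [cancel']
          have h2 := ih ((FreeGroup.of x)⁻¹ * b.1, b.2)
          simp only at h2
          rw [show FreeGroup.of x * ((FreeGroup.of x)⁻¹ * b.1) = b.1 by group] at h2
          exact h2.symm
        | mul g h ihg ihh =>
          intro b
          rw [map_mul, Equiv.Perm.mul_apply, ← ihh b, mul_assoc]
          exact ihg (h * b.1, b.2)
      have h3 := key a.1 (1, a.2)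
      simp only [mul_one] at h3
      rw [show (Quot.mk (pointedRel p) a) = Quot.mk (pointedRel p) (a.1, a.2) from rfl,
        h3, hgen]
end
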